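/- Let R be a commutative ring (e.g. R = ℝ) and a₀, a₁, a₂ ∈ R. Let S₂ be the 10×10 matrix over R whose nonzero entries (row, column indices 1..10) are: S₂[1,1] = 2a₀; S₂[2,3] = −a₁; S₂[2,4] = −a₂; S₂[3,1] = a₁; S₂[3,3] = a₀; S₂[4,1] = a₂; S₂[4,4] = a₀; S₂[5,5] = −2a₀; S₂[5,6] = −2a₁; S₂[5,7] = −2a₂; S₂[6,2] = a₁; S₂[6,6] = −a₀; S₂[6,8] = −a₁; S₂[6,9] = −a₂; S₂[7,2] = a₂; S₂[7,7] = −a₀; S₂[7,9] = −a₁; S₂[7,10] = −a₂; S₂[8,3] = 2a₁; S₂[9,3] = a₂; S₂[9,4] = a₁; S₂[10,4] = 2a₂. Then the characteristic polynomial of S₂ is X⁴(X − a₀)²(X + a₀)²(X − 2a₀)(X + 2a₀) = X⁴(X² − a₀²)²(X² − 4a₀²). In particular, over ℝ the eigenvalues of S₂ (with algebraic multiplicity) are 0 (four times), −2a₀, −a₀ (twice), a₀ (twice), and 2a₀, independently of a₁ and a₂. -/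
import Mathlib


open Matrix Polynomial

/-- The `10×10` matrix `S₍₂₎` appearing in the subprincipal operator of the
linearized gauge-fixed Einstein operator on symmetric 2-tensors at the conormal
bundle of the event horizon, for arbitrary parameters `a₀, a₁, a₂`. -/
def kerrS2 (R : Type*) [CommRing R] (a₀ a₁ a₂ : R) :
    Matrix (Fin 10) (Fin 10) R :=
  !![2*a₀, 0, 0, 0, 0, 0, 0, 0, 0, 0;
     0, 0, -a₁, -a₂, 0, 0, 0, 0, 0, 0;
     a₁, 0, a₀, 0, 0, 0, 0, 0, 0, 0;
     a₂, 0, 0, a₀, 0, 0, 0, 0, 0, 0;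
     0, 0, 0, 0, -(2*a₀), -(2*a₁), -(2*a₂), 0, 0, 0;
     0, a₁, 0, 0, 0, -a₀, 0, -a₁, -a₂, 0;
     0, a₂, 0, 0, 0, 0, -a₀, 0, -a₁, -a₂;
     0, 0, 2*a₁, 0, 0, 0, 0, 0, 0, 0;
     0, 0, a₂, a₁, 0, 0, 0, 0, 0, 0;
     0, 0, 0, 2*a₂, 0, 0, 0, 0, 0, 0]

/-- The equivalence `Fin 4 ⊕ Fin 6 ≃ Fin 10` exhibiting the block-triangular
structure of `kerrS2` (rows/columns `0,1,2,3` versus `4,…,9`). -/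
def kerrS2SplitEquiv : Fin 4 ⊕ Fin 6 ≃ Fin 10 where
  toFun := Sum.elim ![0, 1, 2, 3] ![4, 5, 6, 7, 8, 9]
  invFun := ![.inl 0, .inl 1, .inl 2, .inl 3, .inr 0, .inr 1, .inr 2, .inr 3, .inr 4, .inr 5]
  left_inv := by decide
  right_inv := by decide

set_option maxRecDepth 10000 in
/-- After reindexing along `kerrS2SplitEquiv`, the matrix `S₍₂₎` is block lower
triangular. -/
theorem kerrS2_eq_reindex_fromBlocks (R : Type*) [CommRing R] (a₀ a₁ a₂ : R) :
    kerrS2 R a₀ a₁ a₂ = (Matrix.reindex kerrS2SplitEquiv kerrS2SplitEquiv)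
        (Matrix.fromBlocks
          (!![2*a₀, 0, 0, 0;
              0, 0, -a₁, -a₂;
              a₁, 0, a₀, 0;
              a₂, 0, 0, a₀])
          0
          (!![0, 0, 0, 0;
              0, a₁, 0, 0;
              0, a₂, 0, 0;
              0, 0, 2*a₁, 0;
              0, 0, a₂, a₁;
              0, 0, 0, 2*a₂])
          (!![-(2*a₀), -(2*a₁), -(2*a₂), 0, 0, 0;
              0, -a₀, 0, -a₁, -a₂, 0;
              0, 0, -a₀, 0, -a₁, -a₂;
              0, 0, 0, 0, 0, 0;
              0, 0, 0, 0, 0, 0;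
              0, 0, 0, 0, 0, 0])) := by
  refine Matrix.ext fun i j => ?_
  fin_cases i <;> fin_cases j <;> rfl

/-- The characteristic polynomial of a block lower triangular matrix is the
product of the characteristic polynomials of the diagonal blocks. -/
theorem charpoly_fromBlocks_zero₁₂' {R m n : Type*} [CommRing R]
    [Fintype m] [DecidableEq m] [Fintype n] [DecidableEq n]
    (A : Matrix m m R) (B : Matrix n m R) (D : Matrix n n R) :
    (Matrix.fromBlocks A 0 B D).charpoly = A.charpoly * D.charpoly := by
  rw [Matrix.charpoly, charmatrix_fromBlocks, Matrix.map_zero _ (map_zero C), neg_zero,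
    Matrix.det_fromBlocks_zero₁₂, Matrix.charpoly, Matrix.charpoly]

set_option maxRecDepth 10000 in
set_option maxHeartbeats 4000000 in
/-- The characteristic polynomial of the upper-left `4×4` block. -/
theorem kerrS2_block4_charpoly (R : Type*) [CommRing R] (a₀ a₁ a₂ : R) :
    (!![2*a₀, 0, 0, 0;
        0, 0, -a₁, -a₂;
        a₁, 0, a₀, 0;
        a₂, 0, 0, a₀] : Matrix (Fin 4) (Fin 4) R).charpoly
      = X * (X - C a₀) ^ 2 * (X - C (2*a₀)) := by
  have h : charmatrix (!![2*a₀, 0, 0, 0;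
        0, 0, -a₁, -a₂;
        a₁, 0, a₀, 0;
        a₂, 0, 0, a₀] : Matrix (Fin 4) (Fin 4) R)
      = !![X - C (2*a₀), 0 - C 0, 0 - C 0, 0 - C 0;
           0 - C 0, X - C 0, 0 - C (-a₁), 0 - C (-a₂);
           0 - C a₁, 0 - C 0, X - C a₀, 0 - C 0;
           0 - C a₂, 0 - C 0, 0 - C 0, X - C a₀] := by
    refine Matrix.ext fun i j => ?_
    fin_cases i <;> fin_cases j <;> rfl
  rw [Matrix.charpoly, h]
  simp [Matrix.det_succ_row_zero, Fin.sum_univ_succ]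
  ring

set_option maxRecDepth 10000 in
set_option maxHeartbeats 4000000 in
/-- The characteristic polynomial of the lower-right `6×6` block. -/
theorem kerrS2_block6_charpoly (R : Type*) [CommRing R] (a₀ a₁ a₂ : R) :
    (!![-(2*a₀), -(2*a₁), -(2*a₂), 0, 0, 0;
        0, -a₀, 0, -a₁, -a₂, 0;
        0, 0, -a₀, 0, -a₁, -a₂;
        0, 0, 0, 0, 0, 0;
        0, 0, 0, 0, 0, 0;
        0, 0, 0, 0, 0, 0] : Matrix (Fin 6) (Fin 6) R).charpoly
      = X ^ 3 * (X + C a₀) ^ 2 * (X + C (2*a₀)) := by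
  have h : charmatrix (!![-(2*a₀), -(2*a₁), -(2*a₂), 0, 0, 0;
        0, -a₀, 0, -a₁, -a₂, 0;
        0, 0, -a₀, 0, -a₁, -a₂;
        0, 0, 0, 0, 0, 0;
        0, 0, 0, 0, 0, 0;
        0, 0, 0, 0, 0, 0] : Matrix (Fin 6) (Fin 6) R)
      = !![X - C (-(2*a₀)), 0 - C (-(2*a₁)), 0 - C (-(2*a₂)), 0 - C 0, 0 - C 0, 0 - C 0;
           0 - C 0, X - C (-a₀), 0 - C 0, 0 - C (-a₁), 0 - C (-a₂), 0 - C 0;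
           0 - C 0, 0 - C 0, X - C (-a₀), 0 - C 0, 0 - C (-a₁), 0 - C (-a₂);
           0 - C 0, 0 - C 0, 0 - C 0, X - C 0, 0 - C 0, 0 - C 0;
           0 - C 0, 0 - C 0, 0 - C 0, 0 - C 0, X - C 0, 0 - C 0;
           0 - C 0, 0 - C 0, 0 - C 0, 0 - C 0, 0 - C 0, X - C 0] := by
    refine Matrix.ext fun i j => ?_
    fin_cases i <;> fin_cases j <;> rfl
  rw [Matrix.charpoly, h]
  simp [Matrix.det_succ_row_zero, Fin.sum_univ_succ]
  ring

set_option maxRecDepth 10000 in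
set_option maxHeartbeats 4000000 in
/-- The characteristic polynomial of `S₍₂₎` is
`X⁴(X − a₀)²(X + a₀)²(X − 2a₀)(X + 2a₀) = X⁴(X² − a₀²)²(X² − 4a₀²)`; in
particular the eigenvalues of `S₍₂₎` (with algebraic multiplicity) are `0`
(four times), `−2a₀`, `−a₀` (twice), `a₀` (twice), and `2a₀`, independent of
`a₁` and `a₂`. -/
theorem kerrS2_charpoly (R : Type*) [CommRing R] (a₀ a₁ a₂ : R) :
    (kerrS2 R a₀ a₁ a₂).charpoly
        = X ^ 4 * (X - C a₀) ^ 2 * (X + C a₀) ^ 2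
            * (X - C (2 * a₀)) * (X + C (2 * a₀)) ∧
      (X ^ 4 * (X - C a₀) ^ 2 * (X + C a₀) ^ 2
            * (X - C (2 * a₀)) * (X + C (2 * a₀)) : R[X])
        = X ^ 4 * (X ^ 2 - C (a₀ ^ 2)) ^ 2 * (X ^ 2 - C (4 * a₀ ^ 2)) := by
  constructor
  · rw [kerrS2_eq_reindex_fromBlocks, Matrix.charpoly_reindex,
      charpoly_fromBlocks_zero₁₂', kerrS2_block4_charpoly, kerrS2_block6_charpoly]
    ring
  · simp only [C_mul, C_pow, map_ofNat]
    ring
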